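/- (Selberg's identity) For every positive integer q and all positive integers m, n₁ and every integer n₂, one has S(m,n₁,n₂;q) = Σ_{d | gcd(m,n₁,q)} d · S(1, m·n₁/d², n₂; q/d). -/

import Mathlib

/-- `e(x) = exp(2πix)`. -/
noncomputable def e (x : ℝ) : ℂ := Complex.exp (2 * Real.pi * Complex.I * x)

lemma e_add (x y : ℝ) : e (x + y) = e x * e y := by
  simp only [e]; rw [← Complex.exp_add]; push_cast; ring_nf

lemma e_int (k : ℤ) : e k = 1 := by
  simp only [e]
  rw [show ((2:ℂ) * Real.pi * Complex.I * (k:ℝ)) = (k:ℤ) * (2 * Real.pi * Complex.I) by push_cast; ring]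
  exact Complex.exp_int_mul_two_pi_mul_I k

lemma e_add_int (x : ℝ) (k : ℤ) : e (x + k) = e x := by
  rw [e_add, e_int, mul_one]

lemma e_pow (x : ℝ) (n : ℕ) : e x ^ n = e (n * x) := by
  induction n with
  | zero => simp [e]
  | succ n ih => rw [pow_succ, ih, ← e_add]; congr 1; push_cast; ring

lemma e_eq_one_iff (x : ℝ) : e x = 1 ↔ ∃ n : ℤ, x = n := by
  simp only [e, Complex.exp_eq_one_iff]
  constructor
  · rintro ⟨n, hn⟩
    refine ⟨n, ?_⟩
    have h2 : (2 * Real.pi * Complex.I) ≠ 0 := by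
      simp [Real.pi_ne_zero, Complex.I_ne_zero]
    have : (x : ℂ) = n := by
      have := hn
      rw [show ((n:ℂ) * (2 * Real.pi * Complex.I)) = (2 * Real.pi * Complex.I) * n by ring] at this
      exact mul_left_cancel₀ h2 this
    exact_mod_cast this
  · rintro ⟨n, hn⟩; exact ⟨n, by rw [hn]; push_cast; ring⟩

lemma sum_e_range (g : ℕ) (hg : 0 < g) (k : ℤ) :
    ∑ j ∈ Finset.range g, e ((j : ℝ) * (k : ℝ) / g) = if (g : ℤ) ∣ k then (g : ℂ) else 0 := by
  have harg : ∀ j : ℕ, ((j : ℝ) * (k : ℝ) / g) = (j : ℕ) * ((k : ℝ) / g) := by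
    intro j; ring
  by_cases h : (g : ℤ) ∣ k
  · obtain ⟨t, ht⟩ := h
    rw [if_pos ⟨t, ht⟩]
    have : ∀ j ∈ Finset.range g, e ((j : ℝ) * (k : ℝ) / g) = 1 := by
      intro j _
      have : ((j : ℝ) * (k : ℝ) / g) = ((j * t : ℤ) : ℝ) := by
        have : (k : ℝ) = (g : ℝ) * (t : ℝ) := by exact_mod_cast congrArg (Int.cast : ℤ → ℝ) ht
        rw [this]; push_cast
        field_simp
      rw [this]
      exact e_int _
    rw [Finset.sum_congr rfl this]
    simp
  · rw [if_neg h]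
    have hne : e ((k : ℝ) / g) ≠ 1 := by
      intro hcon
      obtain ⟨n, hn⟩ := (e_eq_one_iff _).mp hcon
      apply h
      refine ⟨n, ?_⟩
      have hg' : (g : ℝ) ≠ 0 := by positivity
      have : (k : ℝ) = (g : ℝ) * n := by
        field_simp at hn; linarith [hn]
      exact_mod_cast this
    have : ∀ j ∈ Finset.range g, e ((j : ℝ) * (k : ℝ) / g) = (e ((k:ℝ)/g)) ^ j := by
      intro j _; rw [e_pow]; congr 1; ring
    rw [Finset.sum_congr rfl this, geom_sum_eq hne]
    have : e ((k:ℝ)/g) ^ g = 1 := by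
      rw [e_pow]
      have : (g : ℝ) * ((k:ℝ)/g) = ((k : ℤ) : ℝ) := by
        field_simp
      rw [this]; exact e_int k
    rw [this]; simp

lemma delta (q : ℕ) (hq : 0 < q) (k : ℤ) :
    ∑ c ∈ Finset.Icc 1 q, e ((c : ℝ) * (k : ℝ) / q) = if (q : ℤ) ∣ k then (q : ℂ) else 0 := by
  rw [← sum_e_range q hq k]
  have h1 : Finset.Icc 1 q = insert q (Finset.Icc 1 (q - 1)) := by
    ext x; simp [Finset.mem_Icc, Finset.mem_insert]; omega
  have h2 : Finset.range q = insert 0 (Finset.Icc 1 (q - 1)) := by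
    ext x; simp [Finset.mem_range, Finset.mem_Icc, Finset.mem_insert]; omega
  rw [h1, h2, Finset.sum_insert (by simp only [Finset.mem_Icc]; omega), Finset.sum_insert (by simp only [Finset.mem_Icc]; omega)]
  congr 1
  have hq' : (q:ℝ) ≠ 0 := by positivity
  have : (q : ℝ) * (k:ℝ) / q = ((k:ℤ):ℝ) := by field_simp
  rw [this, e_int]
  norm_num [e]

lemma coprime_cancel (q' b' : ℕ) (hb : Nat.Coprime b' q') (x : ℤ) (h : (q' : ℤ) ∣ x * b') :
    (q' : ℤ) ∣ x := by
  have hc : IsCoprime (q' : ℤ) (b' : ℤ) := by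
    rw [Int.isCoprime_iff_gcd_eq_one]
    simpa [Int.gcd_natCast_natCast] using hb.symm
  exact hc.dvd_of_dvd_mul_right h

lemma solve (q' : ℕ) (hq' : 0 < q') (b' : ℕ) (hb : Nat.Coprime b' q') (s : ℤ) :
    ∃! c : ℕ, c ∈ Finset.Icc 1 q' ∧ (q' : ℤ) ∣ ((c : ℤ) * b' + s) := by
  haveI : NeZero q' := ⟨hq'.ne'⟩
  set u : ZMod q' := (-s) * ((b' : ZMod q'))⁻¹ with hu
  set c₀ : ℕ := if u.val = 0 then q' else u.val with hc₀
  have hval : u.val < q' := ZMod.val_lt u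
  have hcmem : c₀ ∈ Finset.Icc 1 q' := by
    simp only [Finset.mem_Icc, hc₀]
    split <;> omega
  have hcast : (c₀ : ZMod q') = u := by
    by_cases h : u.val = 0
    · rw [hc₀, if_pos h]
      have : u = 0 := by rwa [← ZMod.val_eq_zero]
      rw [this, ZMod.natCast_self]
    · rw [hc₀, if_neg h, ZMod.natCast_val, ZMod.cast_id]
  have hub : u * (b' : ZMod q') = -s := by
    rw [hu, mul_assoc, ZMod.inv_mul_of_unit, mul_one]
    exact (ZMod.unitOfCoprime b' hb).isUnit
  have hsol : (q' : ℤ) ∣ ((c₀ : ℤ) * b' + s) := by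
    rw [← ZMod.intCast_zmod_eq_zero_iff_dvd]
    push_cast
    rw [hcast, hub]
    ring
  refine ⟨c₀, ⟨hcmem, hsol⟩, ?_⟩
  rintro c ⟨hcm, hcd⟩
  have hdiff : (q' : ℤ) ∣ ((c : ℤ) - c₀) * b' := by
    have := dvd_sub hcd hsol
    rw [show ((c : ℤ) - c₀) * b' = ((c : ℤ) * b' + s) - ((c₀ : ℤ) * b' + s) by ring]; exact this
  have h2 : (q' : ℤ) ∣ ((c : ℤ) - c₀) := coprime_cancel q' b' hb _ hdiff
  obtain ⟨k, hk⟩ := h2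
  simp only [Finset.mem_Icc] at hcm hcmem
  have hb1 : -(q' : ℤ) < (c : ℤ) - c₀ := by omega
  have hb2 : (c : ℤ) - c₀ < q' := by omega
  have hk0 : k = 0 := by
    by_contra hk0
    rcases lt_or_gt_of_ne hk0 with h | h
    · have : (q' : ℤ) * k ≤ -q' := by
        have : k ≤ -1 := by omega
        nlinarith [Int.natCast_pos.mpr hq']
      omega
    · have : (q' : ℤ) * k ≥ q' := by
        have : k ≥ 1 := by omega
        nlinarith [Int.natCast_pos.mpr hq']
      omega
  rw [hk0, mul_zero] at hk
  omega

lemma reindex_b (q : ℕ) (hq : 0 < q) (f : ℕ → ℂ) :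
    ∑ b ∈ Finset.Icc 1 q, f b
      = ∑ d ∈ q.divisors,
          ∑ b' ∈ (Finset.Icc 1 (q / d)).filter (fun b' => Nat.Coprime b' (q / d)), f (d * b') := by
  trans (∑ p ∈ q.divisors.sigma (fun d => (Finset.Icc 1 (q / d)).filter
      (fun b' => Nat.Coprime b' (q / d))), f (p.1 * p.2))
  swap
  · rw [Finset.sum_sigma]
  refine Finset.sum_bij' (fun b _ => (⟨Nat.gcd b q, b / Nat.gcd b q⟩ : Σ _ : ℕ, ℕ))
    (fun p _ => p.1 * p.2) ?_ ?_ ?_ ?_ ?_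
  · rintro b hb
    simp only [Finset.mem_Icc] at hb
    have hb0 : 0 < b := hb.1
    have hg : 0 < Nat.gcd b q := Nat.gcd_pos_of_pos_left q hb0
    have hgd : Nat.gcd b q ∣ q := Nat.gcd_dvd_right b q
    have hgb : Nat.gcd b q ∣ b := Nat.gcd_dvd_left b q
    simp only [Finset.mem_sigma, Nat.mem_divisors, Finset.mem_filter, Finset.mem_Icc]
    refine ⟨⟨hgd, hq.ne'⟩, ⟨Nat.one_le_div_iff hg |>.mpr (Nat.le_of_dvd hb0 hgb),
      Nat.div_le_div_right hb.2⟩, ?_⟩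
    exact Nat.coprime_div_gcd_div_gcd hg
  · rintro ⟨d, b'⟩ hp
    simp only [Finset.mem_sigma, Nat.mem_divisors, Finset.mem_filter, Finset.mem_Icc] at hp
    obtain ⟨⟨hdq, _⟩, ⟨hb1, hb2⟩, _⟩ := hp
    have hd0 : 0 < d := Nat.pos_of_dvd_of_pos hdq hq
    simp only [Finset.mem_Icc]
    constructor
    · exact Nat.one_le_iff_ne_zero.mpr (by positivity)
    · calc d * b' ≤ d * (q / d) := Nat.mul_le_mul_left d hb2
        _ = q := Nat.mul_div_cancel' hdq
  · rintro b hb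
    simp only [Finset.mem_Icc] at hb
    exact Nat.mul_div_cancel' (Nat.gcd_dvd_left b q)
  · rintro ⟨d, b'⟩ hp
    simp only [Finset.mem_sigma, Nat.mem_divisors, Finset.mem_filter, Finset.mem_Icc] at hp
    obtain ⟨⟨hdq, _⟩, ⟨hb1, hb2⟩, hcop⟩ := hp
    have hd0 : 0 < d := Nat.pos_of_dvd_of_pos hdq hq
    have hgcd : Nat.gcd (d * b') q = d := by
      conv_lhs => rw [← Nat.mul_div_cancel' hdq]
      rw [Nat.gcd_mul_left]
      rw [Nat.Coprime.gcd_eq_one hcop, mul_one]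
    show (⟨Nat.gcd (d * b') q, d * b' / Nat.gcd (d * b') q⟩ : Σ _ : ℕ, ℕ) = ⟨d, b'⟩
    rw [hgcd, Nat.mul_div_cancel_left b' hd0]
  · rintro b hb
    show f b = f (Nat.gcd b q * (b / Nat.gcd b q))
    rw [Nat.mul_div_cancel' (Nat.gcd_dvd_left b q)]

lemma reindex_c (d q' : ℕ) (hd : 0 < d) (hq' : 0 < q') (g : ℕ → ℂ) :
    ∑ c ∈ Finset.Icc 1 (d * q'), g c
      = ∑ c' ∈ Finset.Icc 1 q', ∑ j ∈ Finset.range d, g (c' + j * q') := by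
  trans (∑ p ∈ (Finset.Icc 1 q') ×ˢ (Finset.range d), g (p.1 + p.2 * q'))
  swap
  · rw [Finset.sum_product]
  refine Finset.sum_bij' (fun c _ => ((c - 1) % q' + 1, (c - 1) / q'))
    (fun p _ => p.1 + p.2 * q') ?_ ?_ ?_ ?_ ?_
  · rintro c hc
    simp only [Finset.mem_Icc] at hc
    simp only [Finset.mem_product, Finset.mem_Icc, Finset.mem_range]
    refine ⟨⟨by omega, by have := Nat.mod_lt (c - 1) hq'; omega⟩, ?_⟩
    rw [Nat.div_lt_iff_lt_mul hq']
    omega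
  · rintro ⟨c', j⟩ hp
    simp only [Finset.mem_product, Finset.mem_Icc, Finset.mem_range] at hp
    simp only [Finset.mem_Icc]
    constructor
    · omega
    · have h1 : j * q' ≤ (d - 1) * q' := Nat.mul_le_mul_right q' (by omega)
      have : c' + j * q' ≤ q' + (d - 1) * q' := by omega
      calc c' + j * q' ≤ q' + (d - 1) * q' := this
        _ = d * q' := by
            obtain ⟨n, rfl⟩ : ∃ n, d = n + 1 := ⟨d - 1, by omega⟩
            rw [Nat.add_sub_cancel]
            ring
  · rintro c hc
    simp only [Finset.mem_Icc] at hc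
    have := Nat.mod_add_div' (c - 1) q'
    simp only
    omega
  · rintro ⟨c', j⟩ hp
    simp only [Finset.mem_product, Finset.mem_Icc, Finset.mem_range] at hp
    have h1 : c' + j * q' - 1 = (c' - 1) + j * q' := by omega
    simp only [h1, Nat.add_mul_mod_self_right, Nat.add_mul_div_right _ _ hq']
    have h2 : (c' - 1) % q' = c' - 1 := Nat.mod_eq_of_lt (by omega)
    have h3 : (c' - 1) / q' = 0 := Nat.div_eq_of_lt (by omega)
    rw [Prod.mk.injEq]
    constructor
    · rw [h2]; omega
    · rw [h3]; omega
  · rintro c hc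
    simp only [Finset.mem_Icc] at hc
    show g c = g ((c - 1) % q' + 1 + (c - 1) / q' * q')
    congr 1
    have := Nat.mod_add_div' (c - 1) q'
    omega

/-- The generalized Kloosterman sum
`S(m,n₁,n₂;q) = Σ_{a=1}^{q} Σ_{b=1}^{q} δ_q(ab − m) · e((a·n₁ + b·n₂)/q)`. -/
noncomputable def Kl (m n₁ n₂ : ℤ) (q : ℕ) : ℂ :=
  ∑ a ∈ Finset.Icc 1 q, ∑ b ∈ Finset.Icc 1 q,
    (if (q : ℤ) ∣ ((a : ℤ) * (b : ℤ) - m) then (1 : ℂ) else 0) *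
      e (((a : ℝ) * (n₁ : ℝ) + (b : ℝ) * (n₂ : ℝ)) / q)

noncomputable def F (m n₁ n₂ : ℤ) (q : ℕ) : ℂ :=
  ∑ b ∈ Finset.Icc 1 q, ∑ c ∈ Finset.Icc 1 q,
    (if (q : ℤ) ∣ ((c : ℤ) * (b : ℤ) + n₁) then (1 : ℂ) else 0) *
      e (((b : ℝ) * (n₂ : ℝ) - (c : ℝ) * (m : ℝ)) / q)

lemma Kl_eq_F (m n₁ n₂ : ℤ) (q : ℕ) (hq : 0 < q) : Kl m n₁ n₂ q = F m n₁ n₂ q := by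
  have hq0 : (q : ℂ) ≠ 0 := Nat.cast_ne_zero.mpr hq.ne'
  apply mul_left_cancel₀ hq0
  have lhs_eq : (q : ℂ) * Kl m n₁ n₂ q
      = ∑ a ∈ Finset.Icc 1 q, ∑ b ∈ Finset.Icc 1 q, ∑ c ∈ Finset.Icc 1 q,
          e (((c : ℝ) * ((a : ℝ) * (b : ℝ) - (m : ℝ))
              + ((a : ℝ) * (n₁ : ℝ) + (b : ℝ) * (n₂ : ℝ))) / q) := by
    rw [Kl, Finset.mul_sum]
    refine Finset.sum_congr rfl (fun a _ => ?_)
    rw [Finset.mul_sum]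
    refine Finset.sum_congr rfl (fun b _ => ?_)
    rw [← mul_assoc, mul_ite, mul_one, mul_zero, ← delta q hq ((a : ℤ) * b - m),
      Finset.sum_mul]
    refine Finset.sum_congr rfl (fun c _ => ?_)
    rw [← e_add]
    congr 1
    push_cast
    ring
  have rhs_eq : (q : ℂ) * F m n₁ n₂ q
      = ∑ b ∈ Finset.Icc 1 q, ∑ c ∈ Finset.Icc 1 q, ∑ a ∈ Finset.Icc 1 q,
          e (((c : ℝ) * ((a : ℝ) * (b : ℝ) - (m : ℝ))
              + ((a : ℝ) * (n₁ : ℝ) + (b : ℝ) * (n₂ : ℝ))) / q) := by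
    rw [F, Finset.mul_sum]
    refine Finset.sum_congr rfl (fun b _ => ?_)
    rw [Finset.mul_sum]
    refine Finset.sum_congr rfl (fun c _ => ?_)
    rw [← mul_assoc, mul_ite, mul_one, mul_zero, ← delta q hq ((c : ℤ) * b + n₁),
      Finset.sum_mul]
    refine Finset.sum_congr rfl (fun a _ => ?_)
    rw [← e_add]
    congr 1
    push_cast
    ring
  rw [lhs_eq, rhs_eq]
  rw [Finset.sum_comm]
  refine Finset.sum_congr rfl (fun b _ => ?_)
  rw [Finset.sum_comm]

lemma condA (d q' : ℤ) (hd : 0 < d) (b' c' j n₁ : ℤ) :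
    d * q' ∣ ((c' + j * q') * (d * b') + n₁)
      ↔ ((d ∣ n₁) ∧ (q' ∣ (c' * b' + n₁ / d))) := by
  constructor
  · intro h
    have h2 : d ∣ (c' + j * q') * (d * b') := ⟨(c' + j * q') * b', by ring⟩
    have h3 : d ∣ (c' + j * q') * (d * b') + n₁ := dvd_trans ⟨q', rfl⟩ h
    have hd1 : d ∣ n₁ := by simpa using dvd_sub h3 h2
    refine ⟨hd1, ?_⟩
    obtain ⟨t, ht⟩ := hd1
    have htq : n₁ / d = t := by rw [ht]; exact Int.mul_ediv_cancel_left t hd.ne'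
    rw [htq]
    have hre : (c' + j * q') * (d * b') + n₁ = d * ((c' * b' + t) + j * b' * q') := by
      rw [ht]; ring
    rw [hre] at h
    have h4 : q' ∣ (c' * b' + t) + j * b' * q' := (mul_dvd_mul_iff_left hd.ne').mp h
    have h5 : q' ∣ j * b' * q' := ⟨j * b', by ring⟩
    simpa using dvd_sub h4 h5
  · rintro ⟨hd1, hq1⟩
    obtain ⟨t, ht⟩ := hd1
    have htq : n₁ / d = t := by rw [ht]; exact Int.mul_ediv_cancel_left t hd.ne'
    rw [htq] at hq1
    obtain ⟨u, hu⟩ := hq1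
    refine ⟨u + j * b', ?_⟩
    rw [ht]
    linear_combination d * hu

noncomputable def G (m' n₁' n₂ : ℤ) (q' : ℕ) : ℂ :=
  ∑ b ∈ (Finset.Icc 1 q').filter (fun b => Nat.Coprime b q'), ∑ c ∈ Finset.Icc 1 q',
    (if (q' : ℤ) ∣ ((c : ℤ) * (b : ℤ) + n₁') then (1 : ℂ) else 0) *
      e (((b : ℝ) * (n₂ : ℝ) - (c : ℝ) * (m' : ℝ)) / q')

lemma F_eval (m n₁ n₂ : ℤ) (q : ℕ) (hq : 0 < q) :
    F m n₁ n₂ q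
      = ∑ d ∈ q.divisors,
          (if ((d : ℤ) ∣ m ∧ (d : ℤ) ∣ n₁)
            then (d : ℂ) * G (m / (d : ℤ)) (n₁ / (d : ℤ)) n₂ (q / d) else 0) := by
  rw [F, reindex_b q hq]
  refine Finset.sum_congr rfl (fun d hd => ?_)
  have hdq : d ∣ q := (Nat.mem_divisors.mp hd).1
  have hd0 : 0 < d := Nat.pos_of_dvd_of_pos hdq hq
  set q' : ℕ := q / d with hq'def
  have hq' : 0 < q' := Nat.div_pos (Nat.le_of_dvd hq hdq) hd0
  have hqd : q = d * q' := (Nat.mul_div_cancel' hdq).symm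
  have hinner : ∀ b' ∈ (Finset.Icc 1 q').filter (fun b' => Nat.Coprime b' q'),
      (∑ c ∈ Finset.Icc 1 q,
        (if (q : ℤ) ∣ ((c : ℤ) * ((d * b' : ℕ) : ℤ) + n₁) then (1 : ℂ) else 0) *
          e ((((d * b' : ℕ) : ℝ) * (n₂ : ℝ) - (c : ℝ) * (m : ℝ)) / q))
      = ∑ c' ∈ Finset.Icc 1 q',
          (if ((d : ℤ) ∣ n₁ ∧ (q' : ℤ) ∣ ((c' : ℤ) * (b' : ℤ) + n₁ / (d : ℤ)))
            then (1 : ℂ) else 0) *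
            e ((((d * b' : ℕ) : ℝ) * (n₂ : ℝ) - (c' : ℝ) * (m : ℝ)) / q) *
            (if (d : ℤ) ∣ m then (d : ℂ) else 0) := by
    intro b' _
    rw [show (Finset.Icc 1 q) = Finset.Icc 1 (d * q') from by rw [← hqd]]
    rw [reindex_c d q' hd0 hq']
    refine Finset.sum_congr rfl (fun c' hc' => ?_)
    have hterm : ∀ j ∈ Finset.range d,
        (if (q : ℤ) ∣ (((c' + j * q' : ℕ) : ℤ) * ((d * b' : ℕ) : ℤ) + n₁)
          then (1 : ℂ) else 0) *
          e ((((d * b' : ℕ) : ℝ) * (n₂ : ℝ) - ((c' + j * q' : ℕ) : ℝ) * (m : ℝ)) / q)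
        = (if ((d : ℤ) ∣ n₁ ∧ (q' : ℤ) ∣ ((c' : ℤ) * (b' : ℤ) + n₁ / (d : ℤ)))
            then (1 : ℂ) else 0) *
            e ((((d * b' : ℕ) : ℝ) * (n₂ : ℝ) - (c' : ℝ) * (m : ℝ)) / q) *
            e ((j : ℝ) * ((-m : ℤ) : ℝ) / d) := by
      intro j _
      have hiff : ((q : ℤ) ∣ (((c' + j * q' : ℕ) : ℤ) * ((d * b' : ℕ) : ℤ) + n₁))
          ↔ ((d : ℤ) ∣ n₁ ∧ (q' : ℤ) ∣ ((c' : ℤ) * (b' : ℤ) + n₁ / (d : ℤ))) := by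
        have := condA (d : ℤ) (q' : ℤ) (by exact_mod_cast hd0) (b' : ℤ) (c' : ℤ) (j : ℤ) n₁
        rw [hqd]
        push_cast
        exact this
      rw [if_congr hiff rfl rfl]
      have hexp : (((d * b' : ℕ) : ℝ) * (n₂ : ℝ) - ((c' + j * q' : ℕ) : ℝ) * (m : ℝ)) / q
          = (((d * b' : ℕ) : ℝ) * (n₂ : ℝ) - (c' : ℝ) * (m : ℝ)) / q
            + (j : ℝ) * ((-m : ℤ) : ℝ) / d := by
        have hd0' : (d : ℝ) ≠ 0 := by positivity
        have hq0' : (q' : ℝ) ≠ 0 := by positivity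
        rw [hqd]
        push_cast
        field_simp
        ring
      rw [hexp, e_add]
      ring
    rw [Finset.sum_congr rfl hterm, ← Finset.mul_sum, sum_e_range d hd0 (-m)]
    have : ((d : ℤ) ∣ -m) ↔ ((d : ℤ) ∣ m) := dvd_neg
    rw [if_congr this rfl rfl]
  rw [Finset.sum_congr rfl hinner]
  by_cases hcase : ((d : ℤ) ∣ m ∧ (d : ℤ) ∣ n₁)
  · have hdm := hcase.1
    have hdn := hcase.2
    rw [if_pos hcase, G, Finset.mul_sum]
    refine Finset.sum_congr rfl (fun b' hb' => ?_)
    rw [Finset.mul_sum]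
    refine Finset.sum_congr rfl (fun c' hc' => ?_)
    rw [if_pos hdm]
    have hiff2 : ((q' : ℤ) ∣ ((c' : ℤ) * (b' : ℤ) + n₁ / (d : ℤ)))
        ↔ ((d : ℤ) ∣ n₁ ∧ (q' : ℤ) ∣ ((c' : ℤ) * (b' : ℤ) + n₁ / (d : ℤ))) := by
      constructor
      · intro h; exact ⟨hdn, h⟩
      · rintro ⟨_, h⟩; exact h
    rw [if_congr hiff2.symm rfl rfl]
    have hexp2 : (((b' : ℕ) : ℝ) * (n₂ : ℝ) - (c' : ℝ) * ((m / (d : ℤ) : ℤ) : ℝ)) / q'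
        = (((d * b' : ℕ) : ℝ) * (n₂ : ℝ) - (c' : ℝ) * (m : ℝ)) / q := by
      obtain ⟨t, ht⟩ := hdm
      have htq : m / (d : ℤ) = t := by
        rw [ht]; exact Int.mul_ediv_cancel_left t (by exact_mod_cast hd0.ne')
      have hd0' : (d : ℝ) ≠ 0 := by positivity
      have hq0' : (q' : ℝ) ≠ 0 := by positivity
      rw [htq, hqd, ht]
      push_cast
      field_simp
    rw [hexp2]
    ring
  · rw [if_neg hcase]
    refine Finset.sum_eq_zero (fun b' hb' => ?_)
    refine Finset.sum_eq_zero (fun c' hc' => ?_)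
    by_cases hdm : (d : ℤ) ∣ m
    · have hdn : ¬ (d : ℤ) ∣ n₁ := fun h => hcase ⟨hdm, h⟩
      have : ¬ ((d : ℤ) ∣ n₁ ∧ (q' : ℤ) ∣ ((c' : ℤ) * (b' : ℤ) + n₁ / (d : ℤ))) :=
        fun h => hdn h.1
      rw [if_neg this]
      ring
    · rw [if_neg hdm]
      ring

lemma G_match (m' n₁' n₂ : ℤ) (q' : ℕ) (hq' : 0 < q') :
    G m' n₁' n₂ q' = G 1 (m' * n₁') n₂ q' := by
  rw [G, G]
  refine Finset.sum_congr rfl (fun b' hb' => ?_)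
  have hb'cop : Nat.Coprime b' q' := (Finset.mem_filter.mp hb').2
  obtain ⟨c₁, ⟨hc₁m, hc₁d⟩, hc₁u⟩ := solve q' hq' b' hb'cop n₁'
  obtain ⟨c₂, ⟨hc₂m, hc₂d⟩, hc₂u⟩ := solve q' hq' b' hb'cop (m' * n₁')
  have e₁ : (Finset.Icc 1 q').filter (fun c : ℕ => (q' : ℤ) ∣ ((c : ℤ) * b' + n₁')) = {c₁} := by
    rw [Finset.eq_singleton_iff_unique_mem]
    constructor
    · exact Finset.mem_filter.mpr ⟨hc₁m, hc₁d⟩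
    · intro x hx
      have := Finset.mem_filter.mp hx
      exact hc₁u x ⟨this.1, this.2⟩
  have e₂ : (Finset.Icc 1 q').filter (fun c : ℕ => (q' : ℤ) ∣ ((c : ℤ) * b' + m' * n₁')) = {c₂} := by
    rw [Finset.eq_singleton_iff_unique_mem]
    constructor
    · exact Finset.mem_filter.mpr ⟨hc₂m, hc₂d⟩
    · intro x hx
      have := Finset.mem_filter.mp hx
      exact hc₂u x ⟨this.1, this.2⟩
  have key : ∀ (s : ℤ) (f : ℕ → ℂ),
      (∑ c ∈ Finset.Icc 1 q',
        (if (q' : ℤ) ∣ ((c : ℤ) * b' + s) then (1 : ℂ) else 0) * f c)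
      = ∑ c ∈ (Finset.Icc 1 q').filter (fun c : ℕ => (q' : ℤ) ∣ ((c : ℤ) * b' + s)), f c := by
    intro s f
    rw [Finset.sum_filter]
    refine Finset.sum_congr rfl (fun c _ => ?_)
    split <;> ring
  rw [key n₁', key (m' * n₁'), e₁, e₂, Finset.sum_singleton, Finset.sum_singleton]
  -- relation between c₁ and c₂
  have hrel : (q' : ℤ) ∣ ((c₂ : ℤ) - (c₁ : ℤ) * m') := by
    apply coprime_cancel q' b' hb'cop
    have h1 : (q' : ℤ) ∣ (((c₂ : ℤ) * b' + m' * n₁') - m' * ((c₁ : ℤ) * b' + n₁')) :=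
      dvd_sub hc₂d (Dvd.dvd.mul_left hc₁d m')
    convert h1 using 1
    ring
  obtain ⟨t, ht⟩ := hrel
  have hq0' : (q' : ℝ) ≠ 0 := by positivity
  have hc₂r : (c₂ : ℝ) = (c₁ : ℝ) * (m' : ℝ) + (q' : ℝ) * (t : ℝ) := by
    have : (c₂ : ℤ) = (c₁ : ℤ) * m' + (q' : ℤ) * t := by linarith [ht]
    exact_mod_cast congrArg (Int.cast : ℤ → ℝ) this
  have harg : ((b' : ℝ) * (n₂ : ℝ) - (c₂ : ℝ) * ((1 : ℤ) : ℝ)) / q'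
      = ((b' : ℝ) * (n₂ : ℝ) - (c₁ : ℝ) * (m' : ℝ)) / q' + ((-t : ℤ) : ℝ) := by
    rw [hc₂r]
    push_cast
    field_simp
    ring
  rw [harg, e_add_int]

lemma Kl_one (M n₂ : ℤ) (Q : ℕ) (hQ : 0 < Q) : Kl 1 M n₂ Q = G 1 M n₂ Q := by
  rw [Kl_eq_F _ _ _ Q hQ, F_eval _ _ _ Q hQ]
  rw [Finset.sum_eq_single 1]
  · rw [if_pos ⟨one_dvd _, one_dvd _⟩]
    norm_num
  · intro d' _ hne
    rw [if_neg]
    rintro ⟨h1, _⟩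
    exact hne (by exact_mod_cast Int.eq_one_of_dvd_one (by positivity) h1)
  · intro h
    exact absurd (Nat.one_mem_divisors.mpr hQ.ne') h

/-- Selberg's identity. -/
theorem selberg_identity (q : ℕ) (hq : 0 < q) (m n₁ : ℕ) (hm : 0 < m) (hn₁ : 0 < n₁)
    (n₂ : ℤ) :
    Kl (m : ℤ) (n₁ : ℤ) n₂ q
      = ∑ d ∈ (Nat.gcd m (Nat.gcd n₁ q)).divisors,
          (d : ℂ) * Kl 1 ((m * n₁ / d ^ 2 : ℕ) : ℤ) n₂ (q / d) := by
  rw [Kl_eq_F _ _ _ q hq, F_eval _ _ _ q hq, ← Finset.sum_filter]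
  have hset : q.divisors.filter (fun d : ℕ => (d : ℤ) ∣ (m : ℤ) ∧ (d : ℤ) ∣ (n₁ : ℤ))
      = (Nat.gcd m (Nat.gcd n₁ q)).divisors := by
    ext x
    simp only [Finset.mem_filter, Nat.mem_divisors, Int.natCast_dvd_natCast]
    constructor
    · rintro ⟨⟨hxq, _⟩, hxm, hxn⟩
      exact ⟨Nat.dvd_gcd hxm (Nat.dvd_gcd hxn hxq),
        (Nat.gcd_pos_of_pos_left _ hm).ne'⟩
    · rintro ⟨hx, _⟩
      have hxm : x ∣ m := hx.trans (Nat.gcd_dvd_left _ _)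
      have hxr : x ∣ Nat.gcd n₁ q := hx.trans (Nat.gcd_dvd_right _ _)
      exact ⟨⟨hxr.trans (Nat.gcd_dvd_right _ _), hq.ne'⟩, hxm,
        hxr.trans (Nat.gcd_dvd_left _ _)⟩
  rw [hset]
  refine Finset.sum_congr rfl (fun d hd => ?_)
  have hddvd : d ∣ Nat.gcd m (Nat.gcd n₁ q) := (Nat.mem_divisors.mp hd).1
  have hdm : d ∣ m := hddvd.trans (Nat.gcd_dvd_left _ _)
  have hdn : d ∣ n₁ := hddvd.trans ((Nat.gcd_dvd_right _ _).trans (Nat.gcd_dvd_left _ _))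
  have hdq : d ∣ q := hddvd.trans ((Nat.gcd_dvd_right _ _).trans (Nat.gcd_dvd_right _ _))
  have hd0 : 0 < d := Nat.pos_of_dvd_of_pos hdq hq
  have hq'0 : 0 < q / d := Nat.div_pos (Nat.le_of_dvd hq hdq) hd0
  rw [Kl_one _ _ _ hq'0]
  rw [G_match _ _ _ _ hq'0]
  congr 2
  have hM : m * n₁ / d ^ 2 = (m / d) * (n₁ / d) := by
    rw [pow_two, ← Nat.div_mul_div_comm hdm hdn]
  rw [hM]
  push_cast [Int.natCast_ediv]
  ring
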